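/- arXiv:1403.0523 — 5 statements merged into one kernel-verified Lean document; each statement's English description precedes it below -/
import Mathlib

section
/- Let A and B be bounded linear operators on a complex separable Hilbert space H such that both A and the product AB are normal. Then B commutes with AA* (i.e., B(AA*) = (AA*)B) if and only if BA is normal. -/
open ContinuousLinearMap

section Aux

open NormedSpace

variable {E : Type*} [NormedRing E] [StarRing E] [CStarRing E] [CompleteSpace E]
  [NormedAlgebra ℂ E] [StarModule ℂ E]

/-- If `m * t = t * n`, then `exp m * t = t * exp n`. -/
lemma semiconj_exp_aux {m n t : E} (h : m * t = t * n) :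
    exp m * t = t * exp n := by
  have hpow : ∀ k : ℕ, m ^ k * t = t * n ^ k := by
    intro k
    induction k with
    | zero => simp
    | succ k ih =>
      rw [pow_succ, mul_assoc, h, ← mul_assoc, ih, mul_assoc, ← pow_succ]
  have em : exp m = ∑' k : ℕ, ((k.factorial : ℂ))⁻¹ • m ^ k := by rw [exp_eq_tsum ℂ]
  have en : exp n = ∑' k : ℕ, ((k.factorial : ℂ))⁻¹ • n ^ k := by rw [exp_eq_tsum ℂ]
  rw [em, en, ← (expSeries_summable' (𝕂 := ℂ) m).tsum_mul_right t,
    ← (expSeries_summable' (𝕂 := ℂ) n).tsum_mul_left t]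
  congr 1
  funext k
  rw [smul_mul_assoc, hpow k, mul_smul_comm]

/-- **Fuglede–Putnam theorem** in a unital C*-algebra, via Rosenblum's proof. -/
lemma fuglede_putnam_aux {m n t : E} (hm : m * star m = star m * m)
    (hn : n * star n = star n * n) (h : m * t = t * n) :
    star m * t = t * star n := by
  let +nondep : NormedAlgebra ℚ E := .restrictScalars ℚ ℂ E
  have hsemi : ∀ z : ℂ, exp (z • m) * t = t * exp (z • n) := fun z =>
    semiconj_exp_aux (by rw [smul_mul_assoc, h, mul_smul_comm])
  have hskew : ∀ (x : E) (z : ℂ), z • star x - (starRingEnd ℂ z) • x ∈ skewAdjoint E := by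
    intro x z
    rw [skewAdjoint.mem_iff]
    simp only [star_sub, star_smul, star_star, Complex.star_def, Complex.conj_conj, neg_sub]
  have hcomm_smul : ∀ (x : E), x * star x = star x * x → ∀ (z w : ℂ),
      Commute (z • star x) (w • x) := by
    intro x hx z w
    have h0 : Commute (star x) x := hx.symm
    exact (h0.smul_right w).smul_left z
  set F : ℂ → E := fun z => exp (z • star m) * t * exp (z • (-star n)) with hF
  have key : ∀ z : ℂ, F z = t := by
    have hbd : ∀ z : ℂ, ‖F z‖ = ‖t‖ := by
      intro z
      have hu : exp (z • star m - (starRingEnd ℂ z) • m) ∈ unitary E :=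
        exp_mem_unitary_of_mem_skewAdjoint (hskew m z)
      have hv : exp ((starRingEnd ℂ z) • n - z • star n) ∈ unitary E := by
        have h0 := exp_mem_unitary_of_mem_skewAdjoint (hskew n z)
        rw [← Unitary.star_mem_iff] at h0
        simpa only [star_exp, star_sub, star_smul, star_star, Complex.star_def,
          Complex.conj_conj] using h0
      have hsplit_u : exp (z • star m - (starRingEnd ℂ z) • m)
          = exp (z • star m) * exp (-((starRingEnd ℂ z) • m)) := by
        rw [sub_eq_add_neg, exp_add_of_commute ((hcomm_smul m hm z (starRingEnd ℂ z)).neg_right)]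
      have hsplit_v : exp ((starRingEnd ℂ z) • n - z • star n)
          = exp ((starRingEnd ℂ z) • n) * exp (z • (-star n)) := by
        rw [smul_neg, sub_eq_add_neg,
          exp_add_of_commute ((hcomm_smul n hn z (starRingEnd ℂ z)).symm.neg_right)]
      have hmid : exp (-((starRingEnd ℂ z) • m)) * t
          = t * exp (-((starRingEnd ℂ z) • n)) := by
        have h0 := hsemi (-(starRingEnd ℂ z))
        rwa [neg_smul, neg_smul] at h0
      have hvv : exp (-((starRingEnd ℂ z) • n)) * exp ((starRingEnd ℂ z) • n) = 1 := by
        rw [← exp_add_of_commute (Commute.refl _).neg_left, neg_add_cancel, exp_zero]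
      have hFz : F z = exp (z • star m - (starRingEnd ℂ z) • m) *
          (t * exp ((starRingEnd ℂ z) • n - z • star n)) := by
        rw [hsplit_u, hsplit_v]
        calc F z = exp (z • star m) * t * exp (z • (-star n)) := rfl
          _ = exp (z • star m) * ((t * (exp (-((starRingEnd ℂ z) • n)) *
              exp ((starRingEnd ℂ z) • n))) * exp (z • (-star n))) := by
            rw [hvv, mul_one, mul_assoc]
          _ = exp (z • star m) * ((t * exp (-((starRingEnd ℂ z) • n))) *
              (exp ((starRingEnd ℂ z) • n) * exp (z • (-star n)))) := by
            noncomm_ring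
          _ = exp (z • star m) * ((exp (-((starRingEnd ℂ z) • m)) * t) *
              (exp ((starRingEnd ℂ z) • n) * exp (z • (-star n)))) := by
            rw [hmid]
          _ = exp (z • star m) * exp (-((starRingEnd ℂ z) • m)) *
              (t * (exp ((starRingEnd ℂ z) • n) * exp (z • (-star n)))) := by
            noncomm_ring
      rw [hFz, CStarRing.norm_mem_unitary_mul _ hu, CStarRing.norm_mul_mem_unitary _ hv]
    have hdiff : Differentiable ℂ F := by
      have h1 : Differentiable ℂ fun z : ℂ => exp (z • star m) := fun z =>
        (hasDerivAt_exp_smul_const (𝕂 := ℂ) (star m) z).differentiableAt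
      have h2 : Differentiable ℂ fun z : ℂ => exp (z • (-star n)) := fun z =>
        (hasDerivAt_exp_smul_const (𝕂 := ℂ) (-star n) z).differentiableAt
      exact (h1.mul_const t).mul h2
    have hb : Bornology.IsBounded (Set.range F) := by
      rw [isBounded_iff_forall_norm_le]
      exact ⟨‖t‖, by rintro x ⟨z, rfl⟩; exact (hbd z).le⟩
    intro z
    have h0 := hdiff.apply_eq_apply_of_bounded hb z 0
    rwa [show F 0 = t by simp [hF]] at h0
  have hstar : ∀ z : ℂ, exp (z • star m) * t = t * exp (z • star n) := by
    intro z
    have h1 : exp (z • (-star n)) * exp (z • star n) = 1 := by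
      rw [smul_neg, ← exp_add_of_commute (Commute.refl _).neg_left, neg_add_cancel, exp_zero]
    calc exp (z • star m) * t
        = exp (z • star m) * t * (exp (z • (-star n)) * exp (z • star n)) := by
          rw [h1, mul_one]
      _ = F z * exp (z • star n) := by rw [hF]; noncomm_ring
      _ = t * exp (z • star n) := by rw [key z]
  have hd1 : HasDerivAt (fun z : ℂ => exp (z • star m) * t) (star m * t) 0 := by
    have h0 := (hasDerivAt_exp_smul_const' (𝕂 := ℂ) (star m) 0).mul_const t
    rwa [zero_smul, exp_zero, mul_one] at h0
  have hd2 : HasDerivAt (fun z : ℂ => t * exp (z • star n)) (t * star n) 0 := by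
    have h0 := (hasDerivAt_exp_smul_const' (𝕂 := ℂ) (star n) 0).const_mul t
    rwa [zero_smul, exp_zero, mul_one] at h0
  have heq : (fun z : ℂ => exp (z • star m) * t) = fun z : ℂ => t * exp (z • star n) :=
    funext hstar
  rw [heq] at hd1
  exact hd1.unique hd2

/-- Core algebraic argument: if `a` semiconjugates `c` to a normal element `n` and also
`star c` to `star n`, and both `star c * c` and `c * star c` factor through `star a`,
then `c` is normal. -/
lemma selfadj_core {a c n : E} (h1 : a * star c = star n * a) (h2 : a * c = n * a)
    (hn : n * star n = star n * n)
    (f1 : ∃ r, star c * c = star a * r) (f2 : ∃ s, c * star c = star a * s) :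
    c * star c = star c * c := by
  obtain ⟨r, hr⟩ := f1
  obtain ⟨s, hs⟩ := f2
  have h3 : a * (star c * c) = a * (c * star c) := by
    calc a * (star c * c) = (a * star c) * c := by rw [mul_assoc]
      _ = star n * (a * c) := by rw [h1, mul_assoc]
      _ = star n * (n * a) := by rw [h2]
      _ = (n * star n) * a := by rw [← mul_assoc, ← hn]
      _ = n * (a * star c) := by rw [mul_assoc, h1]
      _ = (a * c) * star c := by rw [← mul_assoc, ← h2]
      _ = a * (c * star c) := by rw [mul_assoc]
  have hD0 : a * (star c * c - c * star c) = 0 := by rw [mul_sub, h3, sub_self]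
  have hDstar : star (star c * c - c * star c) = star c * c - c * star c := by
    rw [star_sub, star_mul, star_mul, star_star]
  have hDa : (star c * c - c * star c) * star a = 0 := by
    have h0 := congrArg star hD0
    rwa [star_mul, hDstar, star_zero] at h0
  have e1 : (star c * c - c * star c) * (star c * c) = 0 := by
    have h0 : (star c * c - c * star c) * (star a * r) = 0 := by
      rw [← mul_assoc, hDa, zero_mul]
    rwa [← hr] at h0
  have e2 : (star c * c - c * star c) * (c * star c) = 0 := by
    have h0 : (star c * c - c * star c) * (star a * s) = 0 := by
      rw [← mul_assoc, hDa, zero_mul]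
    rwa [← hs] at h0
  have hD2 : (star c * c - c * star c) * (star c * c - c * star c) = 0 := by
    rw [mul_sub, e1, e2, sub_self]
  have hDz : star c * c - c * star c = 0 := by
    have hn0 : ‖star c * c - c * star c‖ * ‖star c * c - c * star c‖ = 0 := by
      rw [← CStarRing.norm_star_mul_self, hDstar, hD2, norm_zero]
    exact norm_eq_zero.mp (mul_self_eq_zero.mp hn0)
  exact (sub_eq_zero.mp hDz).symm

/-- Forward direction of Kaplansky's theorem, algebraically in a C*-algebra. -/
lemma kaplansky_forward_aux {a b : E} (ha : a * star a = star a * a)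
    (hab : (a * b) * star (a * b) = star (a * b) * (a * b))
    (hcomm : b * (a * star a) = (a * star a) * b) :
    (b * a) * star (b * a) = star (b * a) * (b * a) := by
  have hcomm' : (a * star a) * star b = star b * (a * star a) := by
    have h0 := congrArg star hcomm
    simpa only [star_mul, star_star] using h0
  have h1 : a * star (b * a) = star (a * b) * a := by
    rw [star_mul, star_mul]
    calc a * (star a * star b) = (a * star a) * star b := by rw [← mul_assoc]
      _ = star b * (a * star a) := hcomm'
      _ = star b * (star a * a) := by rw [ha]
      _ = star b * star a * a := by rw [← mul_assoc]
  have h2 : a * (b * a) = (a * b) * a := by rw [mul_assoc]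
  refine selfadj_core h1 h2 hab ⟨star b * (b * a), by rw [star_mul, mul_assoc]⟩
    ⟨a * (b * star b), ?_⟩
  calc (b * a) * star (b * a) = b * (a * star a) * star b := by
        rw [star_mul]; noncomm_ring
    _ = (a * star a) * b * star b := by rw [hcomm]
    _ = star a * (a * (b * star b)) := by rw [ha]; noncomm_ring

/-- Backward direction of Kaplansky's theorem. -/
lemma kaplansky_backward_aux {a b : E} (ha : a * star a = star a * a)
    (hab : (a * b) * star (a * b) = star (a * b) * (a * b))
    (hba : (b * a) * star (b * a) = star (b * a) * (b * a)) :
    b * (a * star a) = (a * star a) * b := by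
  have h : (a * b) * a = a * (b * a) := by rw [mul_assoc]
  have hfp : star (a * b) * a = a * star (b * a) := fuglede_putnam_aux hab hba h
  have h0 := congrArg star hfp
  simp only [star_mul, star_star] at h0
  -- h0 : star a * (a * b) = b * a * star a  (up to assoc)
  calc b * (a * star a) = b * a * star a := by rw [mul_assoc]
    _ = star a * (a * b) := by rw [← h0]
    _ = (star a * a) * b := by rw [mul_assoc]
    _ = (a * star a) * b := by rw [← ha]

end Aux

/-- A bounded operator `T` on a Hilbert space is *normal* if `T T* = T* T`. -/
def IsNormalOp {H : Type*} [NormedAddCommGroup H] [InnerProductSpace ℂ H] [CompleteSpace H]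
    (T : H →L[ℂ] H) : Prop :=
  T * adjoint T = adjoint T * T

/-- **Kaplansky's theorem** (bounded case): if `A` and `AB` are normal, then
`B` commutes with `AA*` if and only if `BA` is normal. -/
theorem kaplansky_bounded {H : Type*} [NormedAddCommGroup H] [InnerProductSpace ℂ H]
    [CompleteSpace H] [TopologicalSpace.SeparableSpace H]
    (A B : H →L[ℂ] H) (hA : IsNormalOp A) (hAB : IsNormalOp (A * B)) :
    B * (A * adjoint A) = (A * adjoint A) * B ↔ IsNormalOp (B * A) := by
  simp only [IsNormalOp, ← star_eq_adjoint] at *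
  constructor
  · exact fun h => kaplansky_forward_aux hA hAB h
  · exact fun h => kaplansky_backward_aux hA hAB h
end

section
/- Let A and B be bounded linear operators on a complex separable Hilbert space H such that A is normal and AB is hyponormal. If AA*B = BAA*, then BA is hyponormal. -/
open ContinuousLinearMap

/-- A bounded operator `T` on a Hilbert space is *hyponormal* if `‖T* x‖ ≤ ‖T x‖`
for all `x`. -/
def IsHyponormalOp {H : Type*} [NormedAddCommGroup H] [InnerProductSpace ℂ H] [CompleteSpace H]
    (T : H →L[ℂ] H) : Prop :=
  ∀ x : H, ‖adjoint T x‖ ≤ ‖T x‖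

/-- Anything commuting with a star-normal element `a` and with `star a` commutes with
`cfc f a`. -/
lemma commute_cfc_of_commute {A : Type*} [CStarAlgebra A] (a : A) [ha : IsStarNormal a]
    (f : ℂ → ℂ) (X : A) (h1 : X * a = a * X) (h2 : X * star a = star a * X) :
    X * cfc f a = cfc f a * X := by
  have hmem : cfc f a ∈ StarAlgebra.elemental ℂ a := by
    by_cases hf : ContinuousOn f (spectrum ℂ a)
    · rw [cfc_apply f a ha hf, cfcHom_eq_of_isStarNormal]
      exact Subtype.coe_prop _
    · rw [cfc_apply_of_not_continuousOn a hf]; exact zero_mem _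
  have key : ∀ y ∈ StarAlgebra.elemental ℂ a, X * y = y * X := by
    intro y hy
    induction hy using StarAlgebra.elemental.induction_on with
    | self => exact h1
    | star_self => exact h2
    | algebraMap r => exact (Algebra.commutes r X).symm
    | add u hu v hv pu pv => rw [mul_add, add_mul, pu, pv]
    | mul u hu v hv pu pv => rw [← mul_assoc, pu, mul_assoc, pv, mul_assoc]
    | closure t ht hpt v hv =>
        have hcl : IsClosed {u : A | X * u = u * X} :=
          isClosed_eq (continuous_mul_left X) (continuous_mul_right X)
        exact closure_minimal (fun u hu => hpt u hu) hcl hv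
  exact key _ hmem

set_option maxHeartbeats 1000000 in
/-- If `A` is normal, `AB` is hyponormal and `A A* B = B A A*`, then `BA` is hyponormal. -/
theorem hyponormal_of_commute {H : Type*} [NormedAddCommGroup H] [InnerProductSpace ℂ H]
    [CompleteSpace H] [TopologicalSpace.SeparableSpace H]
    (A B : H →L[ℂ] H) (hA : IsNormalOp A) (hAB : IsHyponormalOp (A * B))
    (h : A * adjoint A * B = B * (A * adjoint A)) : IsHyponormalOp (B * A) := by
  classical
  have hA0 : A * adjoint A = adjoint A * A := hA
  set P : H →L[ℂ] H := A * adjoint A with hPdef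
  have hA' : P = adjoint A * A := hA0
  have hPstar : star P = P := by
    rw [hPdef, ← star_eq_adjoint, star_mul, star_star]
  have hPsa : IsSelfAdjoint P := hPstar
  haveI : IsStarNormal P := hPsa.isStarNormal
  have hP0 : 0 ≤ P := by
    rw [hPdef, ← star_eq_adjoint]
    exact mul_star_self_nonneg A
  clear_value P
  -- the square-root function
  set f : ℂ → ℂ := fun z => (Real.sqrt z.re : ℂ) with hfdef
  have hfc : Continuous f :=
    Complex.continuous_ofReal.comp (Real.continuous_sqrt.comp Complex.continuous_re)
  set s : H →L[ℂ] H := cfc f P with hsdef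
  have hs_star : star s = s := by
    rw [hsdef, ← cfc_star f P]
    exact cfc_congr fun z _ => Complex.conj_ofReal _
  -- spectrum facts
  have hspec : ∀ z ∈ spectrum ℂ P, f z * f z = z := by
    intro z hz
    have hz' : z = (z.re : ℂ) := hPsa.mem_spectrum_eq_re hz
    have hre : (z.re : ℝ) ∈ spectrum ℝ P := by
      have hmem : algebraMap ℝ ℂ z.re ∈ spectrum ℂ P := by
        rwa [Complex.coe_algebraMap, ← hz']
      exact spectrum.of_algebraMap_mem ℂ hmem
    have h0 : (0:ℝ) ≤ z.re :=
      (StarOrderedRing.nonneg_iff_spectrum_nonneg (R := ℝ) P hPsa).mp hP0 _ hre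
    show ((Real.sqrt z.re : ℂ)) * ((Real.sqrt z.re : ℂ)) = z
    rw [← Complex.ofReal_mul, Real.mul_self_sqrt h0, ← hz']
  have hs_sq : s * s = P := by
    rw [hsdef, ← cfc_mul f f P hfc.continuousOn hfc.continuousOn]
    rw [cfc_congr (fun z hz => hspec z hz)]
    exact cfc_id ℂ P
  have hadj_s : adjoint s = s := by rw [← star_eq_adjoint, hs_star]
  clear_value s
  -- commutation of s
  have comm : ∀ X : H →L[ℂ] H, X * P = P * X → X * s = s * X := by
    intro X hX
    rw [hsdef]
    exact commute_cfc_of_commute P f X hX (by rw [hPstar]; exact hX)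
  have hAT : Commute A (adjoint A) := by rw [Commute, SemiconjBy, ← hPdef, hA']
  have hAP : A * P = P * A := by
    rw [hPdef]; exact ((Commute.refl A).mul_right hAT).eq
  have hTP : adjoint A * P = P * adjoint A := by
    rw [hPdef]; exact (hAT.symm.mul_right (Commute.refl (adjoint A))).eq
  have hBP : B * P = P * B := h.symm
  have hB'P : adjoint B * P = P * adjoint B := by
    have h1 := congrArg star h
    rw [star_mul, star_mul, hPstar, star_eq_adjoint] at h1
    exact h1
  have hsA : A * s = s * A := comm A hAP
  have hsT : adjoint A * s = s * adjoint A := comm (adjoint A) hTP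
  have hsB : B * s = s * B := comm B hBP
  have hsB' : adjoint B * s = s * adjoint B := comm (adjoint B) hB'P
  -- norm facts
  have keyNorm : ∀ X Y : H →L[ℂ] H, adjoint X * X = adjoint Y * Y →
      ∀ y : H, ‖X y‖ = ‖Y y‖ := by
    intro X Y hXY y
    have hX : (inner ℂ (X y) (X y) : ℂ) = inner ℂ ((adjoint X * X) y) y := by
      rw [mul_apply_eq_comp, adjoint_inner_left]
    have hY : (inner ℂ (Y y) (Y y) : ℂ) = inner ℂ ((adjoint Y * Y) y) y := by
      rw [mul_apply_eq_comp, adjoint_inner_left]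
    have h2 : (inner ℂ (X y) (X y) : ℂ) = inner ℂ (Y y) (Y y) := by rw [hX, hY, hXY]
    have h3 := congrArg (RCLike.re (K := ℂ)) h2
    rw [inner_self_eq_norm_sq, inner_self_eq_norm_sq] at h3
    calc ‖X y‖ = Real.sqrt (‖X y‖ ^ 2) := (Real.sqrt_sq (norm_nonneg _)).symm
      _ = Real.sqrt (‖Y y‖ ^ 2) := by rw [h3]
      _ = ‖Y y‖ := Real.sqrt_sq (norm_nonneg _)
  have hsA_norm : ∀ y : H, ‖s y‖ = ‖A y‖ := by
    refine keyNorm s A ?_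
    rw [hadj_s, hs_sq]; exact hA'
  have hTA_norm : ∀ y : H, ‖adjoint A y‖ = ‖A y‖ := by
    refine keyNorm (adjoint A) A ?_
    rw [adjoint_adjoint, ← hPdef]; exact hA'
  -- the main estimate on the range of `adjoint A`
  have hrange : ∀ w : H, ‖adjoint B (s (adjoint A w))‖ ≤ ‖B (A (adjoint A w))‖ := by
    intro w
    have e1 : s (adjoint A w) = adjoint A (s w) := by
      have := congrArg (fun O : H →L[ℂ] H => O w) hsT
      simpa [mul_apply_eq_comp] using this.symm
    have e2 : adjoint (A * B) = adjoint B * adjoint A := by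
      rw [← star_eq_adjoint, star_mul, star_eq_adjoint, star_eq_adjoint]
    have e3 : s (B (s w)) = B (s (s w)) := by
      have := congrArg (fun O : H →L[ℂ] H => O (s w)) hsB
      simpa [mul_apply_eq_comp] using this.symm
    calc ‖adjoint B (s (adjoint A w))‖ = ‖adjoint B (adjoint A (s w))‖ := by rw [e1]
      _ = ‖adjoint (A * B) (s w)‖ := by rw [e2, mul_apply_eq_comp]
      _ ≤ ‖(A * B) (s w)‖ := hAB _
      _ = ‖A (B (s w))‖ := by rw [mul_apply_eq_comp]
      _ = ‖s (B (s w))‖ := (hsA_norm _).symm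
      _ = ‖B (s (s w))‖ := by rw [e3]
      _ = ‖B (P w)‖ := by rw [← mul_apply_eq_comp s s w, hs_sq]
      _ = ‖B (A (adjoint A w))‖ := by rw [hPdef, mul_apply_eq_comp]
  -- orthogonal decomposition along ker A
  set K : Submodule ℂ H := LinearMap.ker (A : H →ₗ[ℂ] H) with hKdef
  haveI : CompleteSpace K := (isClosed_ker A).completeSpace_coe
  intro x
  obtain ⟨u, hu, v, hv, hx⟩ := K.exists_add_mem_mem_orthogonal x
  have hAu : A u = 0 := LinearMap.mem_ker.mp hu
  have hsu : s u = 0 := by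
    have h0 : ‖s u‖ = 0 := by rw [hsA_norm u, hAu, norm_zero]
    exact norm_eq_zero.mp h0
  -- v lies in the closure of the range of `adjoint A`
  set R' : Submodule ℂ H := LinearMap.range ((adjoint A : H →L[ℂ] H) : H →ₗ[ℂ] H) with hRdef
  have horth : R'ᗮ = K := by
    ext z
    constructor
    · intro hz
      have hz' : (inner ℂ (adjoint A (A z)) z : ℂ) = 0 :=
        (Submodule.mem_orthogonal _ z).mp hz _ ⟨A z, rfl⟩
      rw [adjoint_inner_left] at hz'
      exact LinearMap.mem_ker.mpr (inner_self_eq_zero.mp hz')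
    · intro hz
      rw [Submodule.mem_orthogonal]
      rintro y ⟨w, rfl⟩
      rw [ContinuousLinearMap.coe_coe, adjoint_inner_left, show A z = 0 from LinearMap.mem_ker.mp hz, inner_zero_right]
  have hv' : v ∈ closure (R' : Set H) := by
    have hKR : Kᗮ = R'.topologicalClosure := by
      rw [← horth, Submodule.orthogonal_orthogonal_eq_closure]
    have hv2 : v ∈ R'.topologicalClosure := by rw [← hKR]; exact hv
    exact hv2
  -- the inequality holds for v
  have hineq_v : ‖adjoint B (s v)‖ ≤ ‖B (A v)‖ := by
    have hcl : IsClosed {z : H | ‖adjoint B (s z)‖ ≤ ‖B (A z)‖} := by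
      apply isClosed_le
      · exact ((adjoint B).continuous.comp s.continuous).norm
      · exact (B.continuous.comp A.continuous).norm
    have hsub : (R' : Set H) ⊆ {z : H | ‖adjoint B (s z)‖ ≤ ‖B (A z)‖} := by
      rintro z ⟨w, rfl⟩
      exact hrange w
    exact closure_minimal hsub hcl hv'
  -- put everything together
  have e4 : adjoint (B * A) = adjoint A * adjoint B := by
    rw [← star_eq_adjoint, star_mul, star_eq_adjoint, star_eq_adjoint]
  have e5 : s (adjoint B x) = adjoint B (s x) := by
    have := congrArg (fun O : H →L[ℂ] H => O x) hsB'
    simpa [mul_apply_eq_comp] using this.symm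
  have hsx : s x = s v := by rw [hx, map_add, hsu, zero_add]
  have hAx : A x = A v := by rw [hx, map_add, hAu, zero_add]
  calc ‖adjoint (B * A) x‖ = ‖adjoint A (adjoint B x)‖ := by rw [e4, mul_apply_eq_comp]
    _ = ‖A (adjoint B x)‖ := hTA_norm _
    _ = ‖s (adjoint B x)‖ := (hsA_norm _).symm
    _ = ‖adjoint B (s x)‖ := by rw [e5]
    _ = ‖adjoint B (s v)‖ := by rw [hsx]
    _ ≤ ‖B (A v)‖ := hineq_v
    _ = ‖B (A x)‖ := by rw [hAx]
    _ = ‖(B * A) x‖ := by rw [mul_apply_eq_comp]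
end

section
/- Let A and B be bounded linear operators on a complex separable Hilbert space H such that A is normal and AB is co-hyponormal. If AA*B = BAA*, then BA is co-hyponormal. -/
open ContinuousLinearMap

set_option synthInstance.maxHeartbeats 1000000
set_option maxHeartbeats 1000000

/-- A bounded operator `T` on a Hilbert space is *co-hyponormal* if its adjoint is
hyponormal, i.e. `‖T x‖ ≤ ‖T* x‖` for all `x`. -/
def IsCoHyponormalOp {H : Type*} [NormedAddCommGroup H] [InnerProductSpace ℂ H] [CompleteSpace H]
    (T : H →L[ℂ] H) : Prop :=
  ∀ x : H, ‖T x‖ ≤ ‖adjoint T x‖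

lemma isClosed_setCentralizer {M : Type*} [Mul M] [TopologicalSpace M] [T2Space M]
    [ContinuousMul M] (s : Set M) : IsClosed (Set.centralizer s) := by
  have : Set.centralizer s = ⋂ m ∈ s, {x : M | m * x = x * m} := by
    ext x; simp [Set.mem_centralizer_iff]
  rw [this]
  exact isClosed_biInter fun m _ => isClosed_eq (continuous_mul_left m) (continuous_mul_right m)

lemma cfc_mem_elemental' {A : Type*} [CStarAlgebra A] (f : ℂ → ℂ) (a : A) [IsStarNormal a] :
    cfc f a ∈ StarAlgebra.elemental ℂ a := by
  refine cfc_cases (· ∈ StarAlgebra.elemental ℂ a) a f (zero_mem _) fun hf ha' => ?_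
  rw [cfcHom_eq_of_isStarNormal]
  exact SetLike.coe_mem _

open StarAlgebra in
lemma commute_sqrt {H : Type*} [NormedAddCommGroup H] [InnerProductSpace ℂ H] [CompleteSpace H]
    (P B : H →L[ℂ] H) (hP : 0 ≤ P) (h1 : B * P = P * B) (h2 : star B * P = P * star B) :
    B * CFC.sqrt P = CFC.sqrt P * B := by
  have hsa : IsSelfAdjoint P := .of_nonneg hP
  have hnorm : IsStarNormal P := hsa.isStarNormal
  have hmem : CFC.sqrt P ∈ elemental ℂ P := by
    rw [CFC.sqrt_eq_cfc, cfc_nnreal_eq_real _ _ hP, cfc_real_eq_complex _ hsa]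
    exact cfc_mem_elemental' _ _
  have hle : elemental ℂ P ≤ StarSubalgebra.centralizer ℂ {B} := by
    refine elemental.le_of_mem ?_ ?_
    · show IsClosed (Set.centralizer ({B} ∪ star {B}))
      exact isClosed_setCentralizer _
    · rw [StarSubalgebra.mem_centralizer_iff]
      rintro g rfl
      exact ⟨h1.symm ▸ rfl, h2.symm ▸ rfl⟩
  have := (StarSubalgebra.mem_centralizer_iff ℂ).mp (hle hmem) B rfl
  exact this.1

/-- If `adjoint T * T = adjoint S * S` then `T` and `S` have the same pointwise norms. -/
lemma norm_apply_eq_of_adjoint_mul_eq {H : Type*} [NormedAddCommGroup H]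
    [InnerProductSpace ℂ H] [CompleteSpace H] (T S : H →L[ℂ] H)
    (hTS : adjoint T * T = adjoint S * S) (z : H) : ‖T z‖ = ‖S z‖ := by
  have key : ∀ R : H →L[ℂ] H, ‖R z‖ ^ 2 =
      Complex.re (inner ℂ ((adjoint R * R) z) z : ℂ) := by
    intro R
    rw [mul_apply_eq_comp, adjoint_inner_left]
    exact (inner_self_eq_norm_sq (𝕜 := ℂ) (R z)).symm
  have h2 : ‖T z‖ ^ 2 = ‖S z‖ ^ 2 := by rw [key T, key S, hTS]
  calc ‖T z‖ = √(‖T z‖ ^ 2) := (Real.sqrt_sq (norm_nonneg _)).symm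
    _ = √(‖S z‖ ^ 2) := by rw [h2]
    _ = ‖S z‖ := Real.sqrt_sq (norm_nonneg _)

/-- If `A` is normal, `AB` is co-hyponormal and `A A* B = B A A*`, then `BA` is
co-hyponormal. -/
theorem cohyponormal_of_commute {H : Type*} [NormedAddCommGroup H] [InnerProductSpace ℂ H]
    [CompleteSpace H] [TopologicalSpace.SeparableSpace H]
    (A B : H →L[ℂ] H) (hA : IsNormalOp A) (hAB : IsCoHyponormalOp (A * B))
    (h : A * adjoint A * B = B * (A * adjoint A)) : IsCoHyponormalOp (B * A) := by
  have hA' : A * adjoint A = adjoint A * A := hA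
  have hAP0 : A * (A * adjoint A) = (A * adjoint A) * A := by
    conv_lhs => rw [hA', ← mul_assoc]
  set P : H →L[ℂ] H := A * adjoint A with hPdef
  have hPpos : 0 ≤ P := by
    rw [hPdef, ← star_eq_adjoint]
    exact mul_star_self_nonneg A
  have hPsa : IsSelfAdjoint P := .of_nonneg hPpos
  have hAP : A * P = P * A := hAP0
  have hBP : B * P = P * B := h.symm
  have hA'P : star A * P = P * star A := by
    have := congrArg star hAP
    simpa [star_mul, hPsa.star_eq] using this.symm
  have hB'P : star B * P = P * star B := by
    have := congrArg star hBP
    simpa [star_mul, hPsa.star_eq] using this.symm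
  set S : H →L[ℂ] H := CFC.sqrt P with hSdef
  have hSS : S * S = P := CFC.sqrt_mul_sqrt_self P hPpos
  have hSsa : IsSelfAdjoint S := .of_nonneg (CFC.sqrt_nonneg P)
  have hSadj : adjoint S = S := by rw [← star_eq_adjoint]; exact hSsa.star_eq
  have hBS : B * S = S * B := commute_sqrt P B hPpos hBP hB'P
  have hB'S : star B * S = S * star B := commute_sqrt P (star B) hPpos hB'P (by simpa using hBP)
  have hAS : A * S = S * A := commute_sqrt P A hPpos hAP hA'P
  -- pointwise norm identities
  have hadjA : adjoint A * A = adjoint S * S := by rw [hSadj, hSS, ← hA', hPdef]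
  have hadjA' : adjoint (adjoint A) * adjoint A = adjoint S * S := by
    rw [adjoint_adjoint, hSadj, hSS, hPdef]
  have nA : ∀ z, ‖A z‖ = ‖S z‖ := norm_apply_eq_of_adjoint_mul_eq A S hadjA
  have nA' : ∀ z, ‖adjoint A z‖ = ‖S z‖ := norm_apply_eq_of_adjoint_mul_eq (adjoint A) S hadjA'
  have hadjBA : adjoint (B * A) = adjoint A * adjoint B := by
    simp only [← star_eq_adjoint, star_mul]
  have hadjAB : adjoint (A * B) = adjoint B * adjoint A := by
    simp only [← star_eq_adjoint, star_mul]
  -- commutation applied pointwise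
  have appAS : ∀ z, A (S z) = S (A z) := fun z => by
    have := congrArg (fun T : H →L[ℂ] H => T z) hAS; simpa [mul_apply] using this
  have appBS : ∀ z, B (S z) = S (B z) := fun z => by
    have := congrArg (fun T : H →L[ℂ] H => T z) hBS; simpa [mul_apply] using this
  have appB'S : ∀ z, adjoint B (S z) = S (adjoint B z) := fun z => by
    have := congrArg (fun T : H →L[ℂ] H => T z) hB'S
    simpa [mul_apply, star_eq_adjoint] using this
  -- the key inequality on the range of S
  have key : ∀ u, ‖(B * A) (S u)‖ ≤ ‖adjoint (B * A) (S u)‖ := by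
    intro u
    have e1 : (B * A) (S u) = S (B (A u)) := by
      rw [mul_apply_eq_comp, appAS, appBS]
    have e2 : adjoint A (A u) = S (S u) := by
      have := congrArg (fun T : H →L[ℂ] H => T u) hadjA
      simpa [mul_apply, hSadj] using this
    calc ‖(B * A) (S u)‖ = ‖S (B (A u))‖ := by rw [e1]
      _ = ‖A (B (A u))‖ := (nA _).symm
      _ = ‖(A * B) (A u)‖ := by rw [mul_apply_eq_comp]
      _ ≤ ‖adjoint (A * B) (A u)‖ := hAB (A u)
      _ = ‖adjoint B (adjoint A (A u))‖ := by rw [hadjAB, mul_apply_eq_comp]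
      _ = ‖adjoint B (S (S u))‖ := by rw [e2]
      _ = ‖S (adjoint B (S u))‖ := by rw [appB'S]
      _ = ‖adjoint A (adjoint B (S u))‖ := (nA' _).symm
      _ = ‖adjoint (B * A) (S u)‖ := by rw [hadjBA, mul_apply_eq_comp]
  -- the set where the desired inequality holds is closed and contains the closure of range S
  have hclosed : IsClosed {x : H | ‖(B * A) x‖ ≤ ‖adjoint (B * A) x‖} :=
    isClosed_le ((B * A).continuous.norm) ((adjoint (B * A)).continuous.norm)
  have hker_orth : (LinearMap.range (S : H →ₗ[ℂ] H))ᗮ = LinearMap.ker (S : H →ₗ[ℂ] H) := by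
    ext v
    simp only [Submodule.mem_orthogonal, LinearMap.mem_range, LinearMap.mem_ker,
      ContinuousLinearMap.coe_coe]
    constructor
    · intro hv
      have h0 : (inner ℂ (S (S v)) v : ℂ) = 0 := hv _ ⟨S v, rfl⟩
      have e : (inner ℂ ((adjoint S) (S v)) v : ℂ) = inner ℂ (S v) (S v) :=
        adjoint_inner_left S v (S v)
      rw [hSadj] at e
      exact inner_self_eq_zero.mp (e.symm.trans h0)
    · rintro hv u ⟨w, rfl⟩
      have e : (inner ℂ ((adjoint S) w) v : ℂ) = inner ℂ w (S v) := adjoint_inner_left S v w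
      rw [hSadj] at e
      rw [e, hv, inner_zero_right]
  intro x
  obtain ⟨x₀, hx₀, x₁, hx₁, rfl⟩ := (LinearMap.ker (S : H →ₗ[ℂ] H)).exists_add_mem_mem_orthogonal x
  have hSx₀ : S x₀ = 0 := hx₀
  have hAx₀ : A x₀ = 0 := by
    have : ‖A x₀‖ = 0 := by rw [nA, hSx₀, norm_zero]
    exact norm_eq_zero.mp this
  -- x₁ lies in the closure of the range of S
  have hx₁mem : x₁ ∈ {x : H | ‖(B * A) x‖ ≤ ‖adjoint (B * A) x‖} := by
    have h1 : x₁ ∈ (LinearMap.range (S : H →ₗ[ℂ] H)).topologicalClosure := by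
      rw [← Submodule.orthogonal_orthogonal_eq_closure, hker_orth]
      exact hx₁
    have h2 : x₁ ∈ closure ((LinearMap.range (S : H →ₗ[ℂ] H) : Submodule ℂ H) : Set H) := by
      rw [← Submodule.topologicalClosure_coe]
      exact h1
    rw [LinearMap.coe_range] at h2
    refine hclosed.closure_subset_iff.mpr ?_ h2
    rintro y ⟨u, rfl⟩
    exact key u
  -- both sides are unchanged by dropping the kernel component
  have e1 : (B * A) (x₀ + x₁) = (B * A) x₁ := by
    simp [mul_apply, map_add, hAx₀]
  have e2 : ‖adjoint (B * A) (x₀ + x₁)‖ = ‖adjoint (B * A) x₁‖ := by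
    have g : ∀ z : H, ‖adjoint (B * A) z‖ = ‖adjoint B (S z)‖ := by
      intro z
      rw [hadjBA, mul_apply_eq_comp, nA', ← appB'S]
    rw [g, g, map_add, hSx₀, zero_add]
  calc ‖(B * A) (x₀ + x₁)‖ = ‖(B * A) x₁‖ := by rw [e1]
    _ ≤ ‖adjoint (B * A) x₁‖ := hx₁mem
    _ = ‖adjoint (B * A) (x₀ + x₁)‖ := e2.symm
end

section
/- Let A and B be bounded linear operators on a complex separable Hilbert space H such that A is normal, AB is hyponormal, and BA is co-hyponormal. If AA*B = BA*A, then both AB and BA are normal. -/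
open ContinuousLinearMap

open ContinuousLinearMap RCLike

set_option maxHeartbeats 1000000
set_option synthInstance.maxHeartbeats 400000

namespace NHC

private noncomputable def gseq : ℕ → ℝ → ℝ
  | 0 => fun t => t
  | (n+1) => fun t => gseq n t - (gseq n t)^2

private lemma gseq_cont (n : ℕ) : Continuous (gseq n) := by
  induction n with
  | zero => exact continuous_id
  | succ n ih => exact ih.sub (ih.pow 2)

private lemma gseq_succ_apply (n : ℕ) : gseq (n+1) = fun t => gseq n t - (gseq n t)^2 := rfl

private lemma gseq_mem (n : ℕ) {t : ℝ} (ht : t ∈ Set.Icc (0:ℝ) 1) :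
    gseq n t ∈ Set.Icc (0:ℝ) (1/(n+1)) := by
  induction n with
  | zero => simpa [gseq] using ht
  | succ n ih =>
    obtain ⟨h0, h1⟩ := ih
    have hm : (0:ℝ) ≤ (n:ℝ) := n.cast_nonneg
    have hn1 : (0:ℝ) < (n:ℝ) + 1 := by linarith
    have h1' : ((n:ℝ)+1) * gseq n t ≤ 1 := by
      rw [← le_div_iff₀' hn1]; exact h1
    have hs1 : gseq n t ≤ 1 := by
      nlinarith
    have hcast : ((n+1:ℕ):ℝ) + 1 = (n:ℝ) + 1 + 1 := by push_cast; ring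
    rw [Set.mem_Icc, hcast]
    constructor
    · show 0 ≤ gseq n t - (gseq n t)^2
      nlinarith
    · show gseq n t - (gseq n t)^2 ≤ 1/((n:ℝ)+1+1)
      rw [le_div_iff₀ (by linarith)]
      nlinarith [sq_nonneg (1 - ((n:ℝ)+1) * gseq n t),
        mul_nonneg (mul_nonneg hm h0) (by linarith : (0:ℝ) ≤ 1 - ((n:ℝ)+1) * gseq n t),
        sq_nonneg (gseq n t)]

end NHC
open ContinuousLinearMap RCLike

set_option maxHeartbeats 1000000
set_option synthInstance.maxHeartbeats 400000

namespace NHC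

variable {H : Type*} [NormedAddCommGroup H] [InnerProductSpace ℂ H] [CompleteSpace H]

local notation "⟪" x ", " y "⟫" => @inner ℂ _ _ x y

lemma isPositive_real_smul {F : H →L[ℂ] H} {c : ℝ} (hc : 0 ≤ c) (hF : F.IsPositive) :
    (c • F).IsPositive := by
  refine isPositive_def'.mpr ⟨?_, ?_⟩
  · rw [IsSelfAdjoint, star_smul, star_trivial, hF.isSelfAdjoint.star_eq]
  · intro x
    have : (c • F) x = c • (F x) := rfl
    rw [reApplyInnerSelf, this, ← Complex.coe_smul, inner_smul_left]
    simp only [Complex.conj_ofReal]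
    rw [show ((c:ℂ) * ⟪F x, x⟫) = (c:ℝ) • ⟪F x, x⟫ by rw [Complex.real_smul]]
    rw [smul_re]
    exact mul_nonneg hc (hF.re_inner_nonneg_left x)

end NHC

namespace NHC

variable {H : Type*} [NormedAddCommGroup H] [InnerProductSpace ℂ H] [CompleteSpace H]

local notation "⟪" x ", " y "⟫" => @inner ℂ _ _ x y

lemma isPositive_mul_of_commute {F P : H →L[ℂ] H} (hF : F.IsPositive) (hP : P.IsPositive)
    (hc : Commute F P) : (F * P).IsPositive := by
  have hsa : IsSelfAdjoint (F * P) := by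
    rw [IsSelfAdjoint, star_mul, hF.isSelfAdjoint.star_eq, hP.isSelfAdjoint.star_eq, ← hc.eq]
  rcases subsingleton_or_nontrivial H with hH | hH
  · have : F * P = 0 := Subsingleton.elim _ _
    rw [this]; exact isPositive_zero
  refine isPositive_def'.mpr ⟨hsa, fun x => ?_⟩
  rw [reApplyInnerSelf]
  set c : ℝ := ‖F‖ + 1 with hcdef
  have hc0 : (0:ℝ) < c := by positivity
  set F' : H →L[ℂ] H := c⁻¹ • F with hF'def
  have hFF' : F = c • F' := by
    rw [hF'def, smul_smul, mul_inv_cancel₀ hc0.ne', one_smul]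
  have hF'pos : F'.IsPositive := isPositive_real_smul (by positivity) hF
  have hF'sa : IsSelfAdjoint F' := hF'pos.isSelfAdjoint
  -- spectrum of F' lies in [0, 1]
  have hspec : spectrum ℝ F' ⊆ Set.Icc (0:ℝ) 1 := by
    intro t ht
    refine ⟨(SpectrumRestricts.nnreal_iff.mp hF'pos.spectrumRestricts) t ht, ?_⟩
    have h1 : ‖t‖ ≤ ‖F'‖ := spectrum.norm_le_norm_of_mem ht
    have h2 : ‖F'‖ ≤ c⁻¹ * ‖F‖ := by
      rw [hF'def, norm_smul]
      gcongr
      rw [norm_inv, Real.norm_eq_abs, abs_of_pos hc0]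
    have h3 : c⁻¹ * ‖F‖ ≤ 1 := by
      rw [inv_mul_le_iff₀ hc0, mul_one, hcdef]; linarith
    calc t ≤ ‖t‖ := le_abs_self t
    _ ≤ 1 := by linarith
  set D : ℕ → H →L[ℂ] H := fun n => cfc (gseq n) F' with hDdef
  have hD0 : D 0 = F' := by
    rw [hDdef]; exact cfc_id' ℝ F' hF'sa
  have hDrec : ∀ n, D (n+1) = D n - (D n)^2 := by
    intro n
    rw [hDdef]
    show cfc (fun t => gseq n t - (gseq n t)^2) F' = _
    rw [cfc_sub (gseq n) (fun t => gseq n t ^ 2) F' ((gseq_cont n).continuousOn) (((gseq_cont n).pow 2).continuousOn),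
      cfc_pow _ 2 F' ((gseq_cont n).continuousOn)]
  have hDsa : ∀ n, IsSelfAdjoint (D n) := by
    intro n
    induction n with
    | zero => rw [hD0]; exact hF'sa
    | succ n ih => rw [hDrec n]; exact ih.sub (ih.pow 2)
  have hDcomm : ∀ n, Commute P (D n) := by
    intro n
    induction n with
    | zero => rw [hD0, hF'def]; exact (hc.symm).smul_right c⁻¹
    | succ n ih => rw [hDrec n]; exact ih.sub_right (ih.pow_right 2)
  have hDnorm : ∀ n, ‖D n‖ ≤ 1/((n:ℝ)+1) := by
    intro n
    refine norm_cfc_le (by positivity) (fun t ht => ?_)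
    obtain ⟨hg0, hg1⟩ := gseq_mem n (hspec ht)
    rw [Real.norm_eq_abs, abs_le]
    constructor
    · calc -(1/((n:ℝ)+1)) ≤ 0 := neg_nonpos_of_nonneg (by positivity)
      _ ≤ gseq n t := hg0
    · exact hg1
  have hchain : ∀ n, re ⟪(D n * P) x, x⟫ ≤ re ⟪(F' * P) x, x⟫ := by
    intro n
    induction n with
    | zero => rw [hD0]
    | succ n ih =>
      refine le_trans ?_ ih
      have hsq : (0:ℝ) ≤ re ⟪((D n)^2 * P) x, x⟫ := by
        have hpos2 := hP.conj_adjoint (D n)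
        rw [(hDsa n).adjoint_eq] at hpos2
        have e1 : (D n)^2 * P = (D n) ∘L P ∘L (D n) := by
          show _ = (D n) * P * (D n)
          rw [pow_two, mul_assoc, ← (hDcomm n).eq, ← mul_assoc, (hDcomm n).eq]
        rw [e1]
        exact hpos2.re_inner_nonneg_left x
      have e3 : D (n+1) * P = D n * P - (D n)^2 * P := by rw [hDrec n, sub_mul]
      rw [e3]
      have e4 : ⟪(D n * P - (D n)^2 * P) x, x⟫
          = ⟪(D n * P) x, x⟫ - ⟪((D n)^2 * P) x, x⟫ := by
        rw [sub_apply, inner_sub_left]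
      rw [e4, map_sub]
      linarith
  have hbound : ∀ n : ℕ, -(1/((n:ℝ)+1) * ‖P‖ * ‖x‖^2) ≤ re ⟪(F' * P) x, x⟫ := by
    intro n
    refine le_trans ?_ (hchain n)
    have h1 : ‖(D n * P) x‖ ≤ 1/((n:ℝ)+1) * ‖P‖ * ‖x‖ := by
      calc ‖(D n * P) x‖ ≤ ‖D n * P‖ * ‖x‖ := le_opNorm _ x
      _ ≤ ‖D n‖ * ‖P‖ * ‖x‖ := by gcongr; exact norm_mul_le _ _
      _ ≤ 1/((n:ℝ)+1) * ‖P‖ * ‖x‖ := by gcongr; exact hDnorm n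
    have h2 : ‖⟪(D n * P) x, x⟫‖ ≤ 1/((n:ℝ)+1) * ‖P‖ * ‖x‖^2 := by
      calc ‖⟪(D n * P) x, x⟫‖ ≤ ‖(D n * P) x‖ * ‖x‖ := norm_inner_le_norm _ _
      _ ≤ 1/((n:ℝ)+1) * ‖P‖ * ‖x‖ * ‖x‖ := by gcongr
      _ = 1/((n:ℝ)+1) * ‖P‖ * ‖x‖^2 := by ring
    have h3 : |re ⟪(D n * P) x, x⟫| ≤ ‖⟪(D n * P) x, x⟫‖ := abs_re_le_norm _
    have h4 : -(1/((n:ℝ)+1) * ‖P‖ * ‖x‖^2) ≤ re ⟪(D n * P) x, x⟫ := by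
      have := neg_abs_le (re ⟪(D n * P) x, x⟫)
      linarith
    exact h4
  have hlim : Filter.Tendsto (fun n : ℕ => -(1/((n:ℝ)+1) * ‖P‖ * ‖x‖^2))
      Filter.atTop (nhds 0) := by
    have h0 := tendsto_one_div_add_atTop_nhds_zero_nat (𝕜 := ℝ)
    have h1 := (h0.mul_const (‖P‖)).mul_const (‖x‖^2)
    simpa using h1.neg
  have hF'nonneg : 0 ≤ re ⟪(F' * P) x, x⟫ := by
    have := le_of_tendsto' hlim hbound
    simpa using this
  have : F * P = c • (F' * P) := by rw [hFF', smul_mul_assoc]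
  rw [this]
  have h5 : ((c • (F' * P)) x) = c • ((F' * P) x) := rfl
  rw [h5, ← Complex.coe_smul, inner_smul_left]
  simp only [Complex.conj_ofReal]
  rw [show ((c:ℂ) * ⟪(F' * P) x, x⟫) = (c:ℝ) • ⟪(F' * P) x, x⟫ by rw [Complex.real_smul]]
  rw [smul_re]
  exact mul_nonneg hc0.le hF'nonneg

end NHC

open ContinuousLinearMap RCLike

set_option maxHeartbeats 1000000
set_option synthInstance.maxHeartbeats 400000

namespace NHC

variable {H : Type*} [NormedAddCommGroup H] [InnerProductSpace ℂ H] [CompleteSpace H]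

local notation "⟪" x ", " y "⟫" => @inner ℂ _ _ x y

lemma re_inner_star_mul (M : H →L[ℂ] H) (x : H) :
    re ⟪(star M * M) x, x⟫ = ‖M x‖^2 := by
  rw [star_eq_adjoint, mul_def]
  exact (apply_norm_sq_eq_inner_adjoint_left M x).symm

lemma re_inner_mul_star (M : H →L[ℂ] H) (x : H) :
    re ⟪(M * star M) x, x⟫ = ‖star M x‖^2 := by
  have := re_inner_star_mul (star M) x
  rwa [star_star] at this

lemma isPositive_eq_zero {M : H →L[ℂ] H} (hM : M.IsPositive)
    (h : ∀ x, re ⟪M x, x⟫ = 0) : M = 0 := by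
  have hin : ∀ x : H, ⟪M x, x⟫ = 0 := by
    intro x
    have hsa : adjoint M = M := hM.isSelfAdjoint.adjoint_eq
    have hconj : (starRingEnd ℂ) ⟪M x, x⟫ = ⟪M x, x⟫ := by
      rw [inner_conj_symm, ← adjoint_inner_left, hsa]
    have him : (⟪M x, x⟫).im = 0 := (Complex.conj_eq_iff_im.mp hconj)
    have hre : (⟪M x, x⟫).re = 0 := h x
    exact Complex.ext hre him
  have := (inner_map_self_eq_zero (M : H →ₗ[ℂ] H)).mp hin
  ext x; simpa using LinearMap.congr_fun this x

lemma both_eq_zero {M N : H →L[ℂ] H} (hM : M.IsPositive) (hN : N.IsPositive)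
    (h : M + N = 0) : M = 0 ∧ N = 0 := by
  have key : ∀ x, re ⟪M x, x⟫ + re ⟪N x, x⟫ = 0 := by
    intro x
    have h0 : ⟪(M + N) x, x⟫ = 0 := by rw [h]; simp
    rw [add_apply, inner_add_left] at h0
    have := congrArg re h0
    simpa [map_add] using this
  have hM0 : ∀ x, re ⟪M x, x⟫ = 0 := fun x =>
    le_antisymm (by linarith [key x, hN.re_inner_nonneg_left x]) (hM.re_inner_nonneg_left x)
  exact ⟨isPositive_eq_zero hM hM0,
    isPositive_eq_zero hN (fun x => by linarith [key x, hM0 x])⟩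

lemma mul_eq_zero_of_conj_eq_zero {D M : H →L[ℂ] H} (hD : D.IsPositive)
    (h : star M * D * M = 0) : D * M = 0 := by
  have hD' : 0 ≤ D := (nonneg_iff_isPositive D).mpr hD
  have hRR : CFC.sqrt D * CFC.sqrt D = D := CFC.sqrt_mul_sqrt_self D hD'
  have hRsa : IsSelfAdjoint (CFC.sqrt D) := IsSelfAdjoint.of_nonneg (CFC.sqrt_nonneg D)
  have h0 : star (CFC.sqrt D * M) * (CFC.sqrt D * M) = 0 := by
    rw [star_mul, hRsa.star_eq, mul_assoc, ← mul_assoc (CFC.sqrt D) (CFC.sqrt D) M, hRR,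
      ← mul_assoc]
    exact h
  have hRM : CFC.sqrt D * M = 0 := (CStarRing.star_mul_self_eq_zero_iff _).mp h0
  rw [← hRR, mul_assoc, hRM, mul_zero]

end NHC

open ContinuousLinearMap RCLike

/-- If `A` is normal, `AB` is hyponormal, `BA` is co-hyponormal and `A A* B = B A* A`,
then both `AB` and `BA` are normal. -/
theorem normal_of_hyponormal_cohyponormal {H : Type*} [NormedAddCommGroup H]
    [InnerProductSpace ℂ H] [CompleteSpace H] [TopologicalSpace.SeparableSpace H]
    (A B : H →L[ℂ] H) (hA : IsNormalOp A) (hAB : IsHyponormalOp (A * B))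
    (hBA : IsCoHyponormalOp (B * A))
    (h : A * adjoint A * B = B * (adjoint A * A)) :
    IsNormalOp (A * B) ∧ IsNormalOp (B * A) := by
  simp only [IsNormalOp, IsHyponormalOp, IsCoHyponormalOp, ← star_eq_adjoint] at hA hAB hBA h ⊢
  -- commutation of P := star A * A with A, star A, B, star B
  have hPB : (star A * A) * B = B * (star A * A) := by
    nth_rewrite 1 [← hA]; exact h
  have hPsa : IsSelfAdjoint (star A * A) := by
    show star _ = _; rw [star_mul, star_star]
  have hPBs : (star A * A) * star B = star B * (star A * A) := by
    calc (star A * A) * star B = star (B * (star A * A)) := by rw [star_mul, hPsa.star_eq]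
      _ = star ((star A * A) * B) := by rw [hPB]
      _ = star B * (star A * A) := by rw [star_mul, hPsa.star_eq]
  have hPA : (star A * A) * A = A * (star A * A) := by
    nth_rewrite 1 [← hA]; rw [mul_assoc]
  have hPAs : (star A * A) * star A = star A * (star A * A) := by
    calc (star A * A) * star A = star (A * (star A * A)) := by rw [star_mul, hPsa.star_eq]
      _ = star ((star A * A) * A) := by rw [hPA]
      _ = star A * (star A * A) := by rw [star_mul, hPsa.star_eq]
  -- pointed (tail) versions
  have pA : star A * (A * A) = A * (star A * A) := by rw [← mul_assoc]; exact hPA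
  -- sliding versions
  have qB : ∀ X : H →L[ℂ] H, star A * (A * (B * X)) = B * (star A * (A * X)) := by
    intro X
    calc star A * (A * (B * X)) = ((star A * A) * B) * X := by simp only [mul_assoc]
      _ = (B * (star A * A)) * X := by rw [hPB]
      _ = B * (star A * (A * X)) := by simp only [mul_assoc]
  have qBs : ∀ X : H →L[ℂ] H, star A * (A * (star B * X)) = star B * (star A * (A * X)) := by
    intro X
    calc star A * (A * (star B * X)) = ((star A * A) * star B) * X := by simp only [mul_assoc]
      _ = (star B * (star A * A)) * X := by rw [hPBs]
      _ = star B * (star A * (A * X)) := by simp only [mul_assoc]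
  -- positivity of P
  have hPpos : IsPositive (star A * A) := by
    refine isPositive_def'.mpr ⟨hPsa, fun x => ?_⟩
    rw [reApplyInnerSelf, NHC.re_inner_star_mul]
    positivity
  -- canonical forms
  have hT1 : star (A*B) * (A*B) = star B * B * (star A * A) := by
    calc star (A*B) * (A*B) = star B * ((star A * A) * B) := by
          rw [star_mul]; simp only [mul_assoc]
      _ = star B * (B * (star A * A)) := by rw [hPB]
      _ = star B * B * (star A * A) := by rw [← mul_assoc]
  have hT2 : (A*B) * star (A*B) = A * (B * star B) * star A := by
    rw [star_mul]; simp only [mul_assoc]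
  have hS1 : star (B*A) * (B*A) = star A * (star B * B) * A := by
    rw [star_mul]; simp only [mul_assoc]
  have hS2 : (B*A) * star (B*A) = B * star B * (star A * A) := by
    calc (B*A) * star (B*A) = B * ((A * star A) * star B) := by
          rw [star_mul]; simp only [mul_assoc]
      _ = B * ((star A * A) * star B) := by rw [hA]
      _ = B * (star B * (star A * A)) := by rw [hPBs]
      _ = B * star B * (star A * A) := by rw [← mul_assoc]
  set Dop : H →L[ℂ] H := star B * B * (star A * A) - A * (B * star B) * star A with hDopdef
  set Eop : H →L[ℂ] H := B * star B * (star A * A) - star A * (star B * B) * A with hEopdef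
  have hDeq : star (A*B) * (A*B) - (A*B) * star (A*B) = Dop := by rw [hT1, hT2]
  have hEeq : (B*A) * star (B*A) - star (B*A) * (B*A) = Eop := by rw [hS1, hS2]
  -- self-adjointness and positivity of Dop, Eop
  have hDsa : IsSelfAdjoint Dop := by
    rw [← hDeq]
    show star _ = _
    simp only [star_sub, star_mul, star_star]
  have hEsa : IsSelfAdjoint Eop := by
    rw [← hEeq]
    show star _ = _
    simp only [star_sub, star_mul, star_star]
  have hDpos : IsPositive Dop := by
    refine isPositive_def'.mpr ⟨hDsa, fun x => ?_⟩
    rw [reApplyInnerSelf, ← hDeq, sub_apply, inner_sub_left, map_sub,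
      NHC.re_inner_star_mul, NHC.re_inner_mul_star]
    have h1 := hAB x
    have h2 : ‖star (A*B) x‖^2 ≤ ‖(A*B) x‖^2 :=
      pow_le_pow_left₀ (norm_nonneg _) h1 2
    linarith
  have hEpos : IsPositive Eop := by
    refine isPositive_def'.mpr ⟨hEsa, fun x => ?_⟩
    rw [reApplyInnerSelf, ← hEeq, sub_apply, inner_sub_left, map_sub,
      NHC.re_inner_mul_star, NHC.re_inner_star_mul]
    have h1 := hBA x
    have h2 : ‖(B*A) x‖^2 ≤ ‖star (B*A) x‖^2 :=
      pow_le_pow_left₀ (norm_nonneg _) h1 2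
    linarith
  -- commutation of Eop with P
  have hEP : Commute Eop (star A * A) := by
    have cB : Commute (star A * A) B := hPB
    have cBs : Commute (star A * A) (star B) := hPBs
    have cA : Commute (star A * A) A := hPA
    have cAs : Commute (star A * A) (star A) := hPAs
    have c1 : Commute (star A * A) (B * star B * (star A * A)) :=
      ((cB.mul_right cBs).mul_right (Commute.refl _))
    have c2 : Commute (star A * A) (star A * (star B * B) * A) :=
      ((cAs.mul_right (cBs.mul_right cB)).mul_right cA)
    exact (c1.sub_right c2).symm
  -- the key identity
  have hKey : star A * Dop * A + Eop * (star A * A) = 0 := by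
    rw [hDopdef, hEopdef]
    simp only [mul_sub, sub_mul, mul_assoc]
    rw [pA, qB, qBs]
    abel
  -- split into two zero operators
  have hpos1 : (star A * Dop * A).IsPositive := by
    have := hDpos.adjoint_conj A
    rw [← star_eq_adjoint] at this
    exact this
  have hpos2 : (Eop * (star A * A)).IsPositive :=
    NHC.isPositive_mul_of_commute hEpos hPpos hEP
  obtain ⟨hZ1, hZ2⟩ := NHC.both_eq_zero hpos1 hpos2 hKey
  -- D * A = 0 and E * star A = 0
  have hDA : Dop * A = 0 := NHC.mul_eq_zero_of_conj_eq_zero hDpos hZ1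
  have hEsA : Eop * star A = 0 := by
    have h1 : (Eop * star A) * star (Eop * star A) = 0 := by
      rw [star_mul, star_star, hEsa.star_eq]
      have e : Eop * star A * (A * Eop) = (Eop * (star A * A)) * Eop := by
        simp only [mul_assoc]
      rw [e, hZ2, zero_mul]
    exact (CStarRing.mul_star_self_eq_zero_iff _).mp h1
  -- pointwise kernel facts
  have hnorm : ∀ y : H, ‖A y‖ = ‖star A y‖ := by
    intro y
    have e1 : ‖A y‖^2 = ‖star A y‖^2 := by
      rw [← NHC.re_inner_star_mul A y, ← NHC.re_inner_mul_star A y, hA]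
    rw [← Real.sqrt_sq (norm_nonneg (A y)), e1, Real.sqrt_sq (norm_nonneg _)]
  have hAsD : star A * Dop = 0 := by
    have h1 := congrArg star hDA
    rw [star_mul, hDsa.star_eq, star_zero] at h1
    exact h1
  have hAE : A * Eop = 0 := by
    have h1 := congrArg star hEsA
    rw [star_mul, star_star, hEsa.star_eq, star_zero] at h1
    exact h1
  -- Dop * Dop = 0
  have hDapp : ∀ y : H, star A y = 0 → A y = 0 → Dop y = 0 := by
    intro y h1 h2
    rw [hDopdef]
    simp only [sub_apply, mul_apply_eq_comp, h1, h2, map_zero, sub_zero, sub_self]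
  have hEapp : ∀ y : H, star A y = 0 → A y = 0 → Eop y = 0 := by
    intro y h1 h2
    rw [hEopdef]
    simp only [sub_apply, mul_apply_eq_comp, h1, h2, map_zero, sub_zero, sub_self]
  have hDD : Dop * Dop = 0 := by
    ext x
    have hy1 : star A (Dop x) = 0 := by
      have := congrArg (fun M : H →L[ℂ] H => M x) hAsD
      simpa [mul_apply] using this
    have hy2 : A (Dop x) = 0 := by
      rw [← norm_eq_zero, hnorm, hy1, norm_zero]
    simp only [mul_apply, zero_apply]
    exact hDapp (Dop x) hy1 hy2
  have hEE : Eop * Eop = 0 := by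
    ext x
    have hy2 : A (Eop x) = 0 := by
      have := congrArg (fun M : H →L[ℂ] H => M x) hAE
      simpa [mul_apply] using this
    have hy1 : star A (Eop x) = 0 := by
      rw [← norm_eq_zero, ← hnorm, hy2, norm_zero]
    simp only [mul_apply, zero_apply]
    exact hEapp (Eop x) hy1 hy2
  have hD0 : Dop = 0 := by
    refine (CStarRing.star_mul_self_eq_zero_iff _).mp ?_
    rw [hDsa.star_eq]; exact hDD
  have hE0 : Eop = 0 := by
    refine (CStarRing.star_mul_self_eq_zero_iff _).mp ?_
    rw [hEsa.star_eq]; exact hEE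
  constructor
  · have := hDeq.trans hD0
    exact (sub_eq_zero.mp this).symm
  · have := hEeq.trans hE0
    exact sub_eq_zero.mp this
end

section
/- Let A, B and C be (possibly unbounded) densely defined self-adjoint operators in a complex Hilbert space H. If A ⊆ BC (i.e., the composition BC, with domain {x ∈ D(C) : Cx ∈ D(B)}, extends A), then A = BC. -/
noncomputable section

variable {H : Type*} [NormedAddCommGroup H] [InnerProductSpace ℂ H] [CompleteSpace H]

namespace LinearPMap

/-- The composition `S ∘ T` of two partially defined linear operators, with its natural
domain `{x ∈ D(T) : T x ∈ D(S)}`. -/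
noncomputable def pcomp (S T : H →ₗ.[ℂ] H) : H →ₗ.[ℂ] H :=
  { domain := (S.domain.comap T.toFun).map T.domain.subtype
    toFun := (S.toFun.comp ((T.toFun.comp (S.domain.comap T.toFun).subtype).codRestrict
        S.domain fun x => x.2)).comp
      (Submodule.equivMapOfInjective T.domain.subtype Subtype.val_injective
        (S.domain.comap T.toFun)).symm.toLinearMap }

/-- A bounded operator viewed as a partially defined operator with domain the
whole space. -/
noncomputable def ofCLM (A : H →L[ℂ] H) : H →ₗ.[ℂ] H :=
  A.toLinearMap.toPMap ⊤

/-- An unbounded densely defined operator is *normal* if it is closed and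
`N N* = N* N` (including equality of the natural domains). -/
def IsNormalPMap (N : H →ₗ.[ℂ] H) : Prop :=
  Dense (N.domain : Set H) ∧ N.IsClosed ∧ N.pcomp N.adjoint = N.adjoint.pcomp N

end LinearPMap

open LinearPMap

section DNvNHelpers

set_option linter.unusedSectionVars false
set_option maxHeartbeats 1000000

local notation "⟪" x ", " y "⟫" => @inner ℂ _ _ x y

lemma DNvN.mem_pcomp_domain {S T : H →ₗ.[ℂ] H} {x : H} :
    x ∈ (S.pcomp T).domain ↔ ∃ hx : x ∈ T.domain, T ⟨x, hx⟩ ∈ S.domain := by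
  constructor
  · rintro ⟨y, hy, rfl⟩
    exact ⟨y.2, hy⟩
  · rintro ⟨hx, h2⟩
    exact ⟨⟨x, hx⟩, h2, rfl⟩

lemma DNvN.pcomp_apply {S T : H →ₗ.[ℂ] H} (x : (S.pcomp T).domain) (hx : (x : H) ∈ T.domain)
    (hx2 : T ⟨x, hx⟩ ∈ S.domain) : (S.pcomp T) x = S ⟨T ⟨x, hx⟩, hx2⟩ := by
  set e := Submodule.equivMapOfInjective T.domain.subtype Subtype.val_injective
      (S.domain.comap T.toFun) with he
  have hco : ((((e.symm x : S.domain.comap T.toFun) : T.domain)) : H) = (x : H) := by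
    have h1 := Submodule.coe_equivMapOfInjective_apply T.domain.subtype Subtype.val_injective
      (S.domain.comap T.toFun) (e.symm x)
    rw [← he] at h1
    exact h1.symm.trans (congrArg Subtype.val (e.apply_symm_apply x))
  show S.toFun _ = S.toFun _
  congr 1
  apply Subtype.ext
  show T.toFun _ = T.toFun _
  congr 1
  exact Subtype.ext hco

lemma DNvN.symm_inner {T : H →ₗ.[ℂ] H} (hTd : Dense (T.domain : Set H)) (hT : T.adjoint = T)
    (x y : T.domain) : ⟪(T x : H), (y : H)⟫ = ⟪(x : H), (T y : H)⟫ := by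
  have hle : T ≤ T.adjoint := le_of_eq hT.symm
  have h1 := adjoint_isFormalAdjoint hTd (⟨(x : H), hle.1 x.2⟩ : T.adjoint.domain) y
  rwa [← hle.2 (show ((x : T.domain) : H) = _ from rfl)] at h1

lemma DNvN.mem_of_selfAdjoint {T : H →ₗ.[ℂ] H} (hTd : Dense (T.domain : Set H))
    (hT : T.adjoint = T) {x w : H}
    (hw : ∀ u : T.domain, ⟪w, (u : H)⟫ = ⟪x, (T u : H)⟫) :
    ∃ hx : x ∈ T.domain, T ⟨x, hx⟩ = w := by
  have hx' : x ∈ T.adjoint.domain := mem_adjoint_domain_of_exists x ⟨w, hw⟩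
  have happ : T.adjoint ⟨x, hx'⟩ = w := adjoint_apply_eq hTd _ hw
  have hge : T.adjoint ≤ T := le_of_eq hT
  refine ⟨hge.1 hx', ?_⟩
  rw [← hge.2 (show ((⟨x, hx'⟩ : T.adjoint.domain) : H) = x from rfl)]
  exact happ

/-- An eigenvector of a self-adjoint operator for the eigenvalue `-i` vanishes. -/
lemma DNvN.eigen_negI_eq_zero {T : H →ₗ.[ℂ] H} (hTd : Dense (T.domain : Set H))
    (hT : T.adjoint = T) {w : H} (hw : w ∈ T.domain)
    (hval : T ⟨w, hw⟩ = (-Complex.I) • w) : w = 0 := by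
  have hs := DNvN.symm_inner hTd hT ⟨w, hw⟩ ⟨w, hw⟩
  rw [hval] at hs
  rw [inner_smul_left, inner_smul_right] at hs
  rw [_root_.map_neg, Complex.conj_I, neg_neg] at hs
  simp only [Submodule.coe_mk] at hs
  -- hs : I * ⟪w,w⟫ = -I * ⟪w,w⟫
  have hzz : ⟪w, w⟫ = 0 := by
    have h2 : (2 * Complex.I) * ⟪w, w⟫ = 0 := by linear_combination hs
    rcases mul_eq_zero.mp h2 with h' | h'
    · exact absurd h' (by simp [Complex.I_ne_zero])
    · exact h'
  exact inner_self_eq_zero.mp hzz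

/-- A self-adjoint operator plus `i` is surjective. -/
lemma DNvN.surj_selfAdjoint {T : H →ₗ.[ℂ] H} (hTd : Dense (T.domain : Set H))
    (hT : T.adjoint = T) (v : H) :
    ∃ x : T.domain, (T x : H) + Complex.I • (x : H) = v := by
  set L : T.domain →ₗ[ℂ] H := T.toFun + Complex.I • T.domain.subtype with hL
  have hLval : ∀ x : T.domain, L x = (T x : H) + Complex.I • (x : H) := fun x => rfl
  have hnorm : ∀ x : T.domain, ‖(T x : H)‖ ≤ ‖L x‖ ∧ ‖(x : H)‖ ≤ ‖L x‖ := by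
    intro x
    have hreal : (⟪(T x : H), (x : H)⟫).im = 0 := by
      have h1 : (starRingEnd ℂ) ⟪(T x : H), (x : H)⟫ = ⟪(T x : H), (x : H)⟫ := by
        rw [inner_conj_symm, DNvN.symm_inner hTd hT]
      exact Complex.conj_eq_iff_im.mp h1
    have h1 : ‖L x‖ ^ 2 = ‖(T x : H)‖ ^ 2 + ‖(x : H)‖ ^ 2 := by
      rw [hLval, @norm_add_sq ℂ, inner_smul_right]
      have hre : Complex.re (Complex.I * ⟪(T x : H), (x : H)⟫) = 0 := by
        rw [Complex.mul_re, Complex.I_re, Complex.I_im, hreal]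
        ring
      rw [norm_smul, Complex.norm_I]
      simp only [RCLike.re_to_complex] at hre ⊢
      rw [hre]
      ring
    constructor
    · nlinarith [norm_nonneg (L x), norm_nonneg ((T x : H)), norm_nonneg ((x : H)),
        sq_nonneg ‖(x : H)‖]
    · nlinarith [norm_nonneg (L x), norm_nonneg ((T x : H)), norm_nonneg ((x : H)),
        sq_nonneg ‖(T x : H)‖]
  have hclosed : IsClosed ((LinearMap.range L : Submodule ℂ H) : Set H) := by
    apply IsSeqClosed.isClosed
    intro f y hf hfy
    choose x hx using hf
    have hcf : CauchySeq f := hfy.cauchySeq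
    have key : ∀ m n : ℕ, ‖(x m : H) - (x n : H)‖ ≤ dist (f m) (f n) ∧
        ‖(T (x m) : H) - (T (x n) : H)‖ ≤ dist (f m) (f n) := by
      intro m n
      have hsub : L (x m - x n) = f m - f n := by
        rw [L.map_sub, hx, hx]
      have h2 := hnorm (x m - x n)
      rw [hsub] at h2
      rw [dist_eq_norm]
      constructor
      · have := h2.2
        rwa [AddSubgroupClass.coe_sub] at this
      · have := h2.1
        rwa [LinearPMap.map_sub] at this
    have hCx : CauchySeq (fun n => ((x n : H))) := by
      rw [Metric.cauchySeq_iff] at hcf ⊢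
      intro ε hε
      obtain ⟨N, hN⟩ := hcf ε hε
      exact ⟨N, fun m hm n hn => lt_of_le_of_lt (by rw [dist_eq_norm]; exact (key m n).1)
        (hN m hm n hn)⟩
    have hCTx : CauchySeq (fun n => ((T (x n) : H))) := by
      rw [Metric.cauchySeq_iff] at hcf ⊢
      intro ε hε
      obtain ⟨N, hN⟩ := hcf ε hε
      exact ⟨N, fun m hm n hn => lt_of_le_of_lt (by rw [dist_eq_norm]; exact (key m n).2)
        (hN m hm n hn)⟩
    obtain ⟨a, ha⟩ := cauchySeq_tendsto_of_complete hCx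
    obtain ⟨b, hb⟩ := cauchySeq_tendsto_of_complete hCTx
    have hy : b + Complex.I • a = y := by
      have h1 : Filter.Tendsto (fun n => (T (x n) : H) + Complex.I • ((x n : H)))
          Filter.atTop (nhds (b + Complex.I • a)) := hb.add (ha.const_smul _)
      have h2 : (fun n => (T (x n) : H) + Complex.I • ((x n : H))) = f := by
        funext n; rw [← hx n, hLval]
      rw [h2] at h1
      exact tendsto_nhds_unique h1 hfy
    have hmem : ∀ u : T.domain, ⟪b, (u : H)⟫ = ⟪a, (T u : H)⟫ := by
      intro u
      have h1 : Filter.Tendsto (fun n => ⟪(T (x n) : H), (u : H)⟫) Filter.atTop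
          (nhds ⟪b, (u : H)⟫) := hb.inner tendsto_const_nhds
      have h2 : Filter.Tendsto (fun n => ⟪((x n : H)), (T u : H)⟫) Filter.atTop
          (nhds ⟪a, (T u : H)⟫) := ha.inner tendsto_const_nhds
      have h3 : (fun n => ⟪(T (x n) : H), (u : H)⟫) = (fun n => ⟪((x n : H)), (T u : H)⟫) := by
        funext n; exact DNvN.symm_inner hTd hT (x n) u
      rw [h3] at h1
      exact tendsto_nhds_unique h1 h2
    obtain ⟨haT, hTa⟩ := DNvN.mem_of_selfAdjoint hTd hT hmem
    refine ⟨⟨a, haT⟩, ?_⟩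
    rw [hLval, hTa]
    exact hy
  have hbot : (LinearMap.range L)ᗮ = ⊥ := by
    rw [Submodule.eq_bot_iff]
    intro z hz
    rw [Submodule.mem_orthogonal] at hz
    have hz' : ∀ u : T.domain, ⟪(T u : H) + Complex.I • (u : H), z⟫ = 0 := fun u => by
      have := hz (L u) (LinearMap.mem_range_self L u)
      rwa [hLval] at this
    have hw : ∀ u : T.domain, ⟪Complex.I • z, (u : H)⟫ = ⟪z, (T u : H)⟫ := by
      intro u
      have h0 := hz' u
      rw [inner_add_left, inner_smul_left, Complex.conj_I] at h0
      have h1 : ⟪(T u : H), z⟫ = Complex.I * ⟪(u : H), z⟫ := by linear_combination h0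
      have h2 : ⟪z, (T u : H)⟫ = (starRingEnd ℂ) ⟪(T u : H), z⟫ := (inner_conj_symm _ _).symm
      rw [inner_smul_left, Complex.conj_I, h2, h1, map_mul, Complex.conj_I, inner_conj_symm]
    obtain ⟨hzmem, hTz⟩ := DNvN.mem_of_selfAdjoint hTd hT hw
    have hs := DNvN.symm_inner hTd hT ⟨z, hzmem⟩ ⟨z, hzmem⟩
    rw [hTz] at hs
    rw [inner_smul_left, inner_smul_right, Complex.conj_I] at hs
    simp only [Submodule.coe_mk] at hs
    have hzz : ⟪z, z⟫ = 0 := by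
      have h2 : (2 * Complex.I) * ⟪z, z⟫ = 0 := by linear_combination -hs
      rcases mul_eq_zero.mp h2 with h' | h'
      · exact absurd h' (by simp [Complex.I_ne_zero])
      · exact h'
    exact inner_self_eq_zero.mp hzz
  have htop : LinearMap.range L = ⊤ := by
    have hcs : CompleteSpace (LinearMap.range L) := hclosed.completeSpace_coe
    calc LinearMap.range L = (LinearMap.range L)ᗮᗮ :=
          (Submodule.orthogonal_orthogonal _).symm
      _ = (⊥ : Submodule ℂ H)ᗮ := by rw [hbot]
      _ = ⊤ := Submodule.bot_orthogonal_eq_top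
  have hv : v ∈ LinearMap.range L := htop ▸ Submodule.mem_top
  obtain ⟨x, hx⟩ := hv
  exact ⟨x, by rw [← hLval]; exact hx⟩

end DNvNHelpers

section Main

local notation "⟪" x ", " y "⟫" => @inner ℂ _ _ x y

set_option maxHeartbeats 1000000 in
/-- **Devinatz–Nussbaum–von Neumann maximality theorem**: if `A`, `B`, `C` are densely
defined self-adjoint operators and `BC` extends `A`, then `A = BC`. -/
theorem devinatz_nussbaum_von_neumann (A B C : H →ₗ.[ℂ] H)
    (hAdense : Dense (A.domain : Set H)) (hBdense : Dense (B.domain : Set H))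
    (hCdense : Dense (C.domain : Set H))
    (hA : A.adjoint = A) (hB : B.adjoint = B) (hC : C.adjoint = C)
    (h : A ≤ B.pcomp C) : A = B.pcomp C := by
  -- Step 1: `BC + i` is injective.
  have hinj : ∀ z : (B.pcomp C).domain,
      ((B.pcomp C) z : H) + Complex.I • (z : H) = 0 → (z : H) = 0 := by
    intro z hz0
    obtain ⟨hz1, hz2⟩ := DNvN.mem_pcomp_domain.mp z.2
    set w : H := C ⟨(z : H), hz1⟩ with hwdef
    have hval : (B.pcomp C) z = B ⟨w, hz2⟩ := by
      exact DNvN.pcomp_apply z hz1 hz2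
    have hBw : B ⟨w, hz2⟩ = (-Complex.I) • (z : H) := by
      have h9 := hz0
      rw [hval] at h9
      have h10 := eq_neg_of_add_eq_zero_left h9
      rwa [← neg_smul] at h10
    have hmem : (-Complex.I) • (z : H) ∈ C.domain := C.domain.smul_mem _ hz1
    have hCBw : C ⟨(-Complex.I) • (z : H), hmem⟩ = (-Complex.I) • w := by
      have harg : (⟨(-Complex.I) • (z : H), hmem⟩ : C.domain)
          = (-Complex.I) • (⟨(z : H), hz1⟩ : C.domain) := by
        apply Subtype.ext; rfl
      rw [harg, C.map_smul]
    -- `w` is in the domain of `A†` with `A w = -i w`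
    have hfa : ∀ u : A.domain, ⟪(-Complex.I) • w, (u : H)⟫ = ⟪w, (A u : H)⟫ := by
      intro u
      have hu : (u : H) ∈ (B.pcomp C).domain := h.1 u.2
      obtain ⟨hu1, hu2⟩ := DNvN.mem_pcomp_domain.mp hu
      have hAu : A u = B ⟨C ⟨(u : H), hu1⟩, hu2⟩ := by
        have e1 : A u = (B.pcomp C) ⟨(u : H), hu⟩ := h.2 rfl
        have e2 := DNvN.pcomp_apply (⟨(u : H), hu⟩ : (B.pcomp C).domain) hu1 hu2
        rw [e1, e2]
      calc ⟪(-Complex.I) • w, (u : H)⟫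
          = ⟪(C ⟨(-Complex.I) • (z : H), hmem⟩ : H), (u : H)⟫ := by rw [hCBw]
        _ = ⟪((-Complex.I) • (z : H)), (C ⟨(u : H), hu1⟩ : H)⟫ := by
            exact DNvN.symm_inner hCdense hC ⟨(-Complex.I) • (z : H), hmem⟩ ⟨(u : H), hu1⟩
        _ = ⟪(B ⟨w, hz2⟩ : H), (C ⟨(u : H), hu1⟩ : H)⟫ := by rw [hBw]
        _ = ⟪w, (B ⟨C ⟨(u : H), hu1⟩, hu2⟩ : H)⟫ := by
            exact DNvN.symm_inner hBdense hB ⟨w, hz2⟩ ⟨C ⟨(u : H), hu1⟩, hu2⟩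
        _ = ⟪w, (A u : H)⟫ := by rw [hAu]
    obtain ⟨hwA, hAw⟩ := DNvN.mem_of_selfAdjoint hAdense hA hfa
    have hw0 : w = 0 := DNvN.eigen_negI_eq_zero hAdense hA hwA hAw
    have : B ⟨w, hz2⟩ = 0 := by
      have : (⟨w, hz2⟩ : B.domain) = 0 := Subtype.ext hw0
      rw [this, B.map_zero]
    rw [this] at hBw
    have := hBw.symm
    rcases smul_eq_zero.mp this with h' | h'
    · exact absurd h' (by simp [Complex.I_ne_zero])
    · exact h'
  -- Step 2: every element of `D(BC)` is in `D(A)`.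
  have hclaim : ∀ z : (B.pcomp C).domain,
      ∃ hz : (z : H) ∈ A.domain, A ⟨(z : H), hz⟩ = (B.pcomp C) z := by
    intro z
    obtain ⟨x, hx⟩ := DNvN.surj_selfAdjoint hAdense hA
      (((B.pcomp C) z : H) + Complex.I • (z : H))
    have hxBC : (x : H) ∈ (B.pcomp C).domain := h.1 x.2
    have hxval : A x = (B.pcomp C) ⟨(x : H), hxBC⟩ := h.2 rfl
    set d : (B.pcomp C).domain := z - ⟨(x : H), hxBC⟩ with hd
    have hdco : (d : H) = (z : H) - (x : H) := rfl
    have hdval : ((B.pcomp C) d : H) + Complex.I • (d : H) = 0 := by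
      rw [hd, LinearPMap.map_sub, hdco, ← hxval, smul_sub, sub_add_sub_comm, hx, sub_self]
    have hz0 : (z : H) = (x : H) := by
      have := hinj d hdval
      rw [hdco] at this
      exact sub_eq_zero.mp this
    refine ⟨hz0 ▸ x.2, ?_⟩
    have e1 : (⟨(z : H), hz0 ▸ x.2⟩ : A.domain) = x := Subtype.ext hz0
    have e2 : (⟨(x : H), hxBC⟩ : (B.pcomp C).domain) = z := Subtype.ext hz0.symm
    rw [e1, hxval, e2]
  refine le_antisymm h ⟨fun u hu => (hclaim ⟨u, hu⟩).choose, fun x y hxy => ?_⟩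
  obtain ⟨hz, hvalz⟩ := hclaim x
  have : y = ⟨(x : H), hz⟩ := Subtype.ext hxy.symm
  rw [this]
  exact hvalz.symm

end Main
end
end
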